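/- Let X be a topological space, let s : X × X → X be continuous and let c : X be such that s (x, x) = c, s (x, c) = x and s (c, x) = c for all x (a topological opimplicative subtraction). Then the fundamental group of X at c is trivial (FundamentalGroup X c is a subsingleton). -/

import Mathlib

open scoped unitInterval

section Aux

attribute [local instance] Path.Homotopic.setoid

variable {X : Type*} [TopologicalSpace X]

private lemma cast_homotopic {x y x' y' : X} (γ γ' : Path x y) (hx : x' = x) (hy : y' = y)
    (h : γ.Homotopic γ') : (γ.cast hx hy).Homotopic (γ'.cast hx hy) := by
  subst hx; subst hy
  obtain ⟨H⟩ := h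
  exact ⟨H.cast (by ext t; rfl) (by ext t; rfl)⟩

variable (s : X × X → X) (c : X) (hc : Continuous s)
  (h1 : ∀ x, s (x, x) = c)

/-- Apply `s` pointwise to a pair of loops at `c`. -/
private noncomputable def phi (p q : Path c c) : Path c c :=
  ((p.prod q).map hc).cast (by rw [h1]) (by rw [h1])

private lemma phi_coe (p q : Path c c) : ⇑(phi s c hc h1 p q) = fun t => s (p t, q t) := rfl

private lemma phi_refl_right (h2 : ∀ x, s (x, c) = x) (p : Path c c) :
    phi s c hc h1 p (Path.refl c) = p := by
  ext t; exact h2 _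

private lemma phi_refl_left (h3 : ∀ x, s (c, x) = c) (q : Path c c) :
    phi s c hc h1 (Path.refl c) q = Path.refl c := by
  ext t; exact h3 _

private lemma phi_diag (p : Path c c) : phi s c hc h1 p p = Path.refl c := by
  ext t; exact h1 _

private lemma phi_trans (p p' q q' : Path c c) :
    phi s c hc h1 (p.trans p') (q.trans q') =
      (phi s c hc h1 p q).trans (phi s c hc h1 p' q') := by
  ext t
  show s ((p.trans p') t, (q.trans q') t) = ((phi s c hc h1 p q).trans (phi s c hc h1 p' q')) t
  unfold Path.trans
  simp only [Path.coe_mk_mk, Function.comp_apply, phi_coe]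
  split_ifs <;> rfl

private lemma phi_homotopic {p p' q q' : Path c c} (hp : p.Homotopic p') (hq : q.Homotopic q') :
    (phi s c hc h1 p q).Homotopic (phi s c hc h1 p' q') := by
  have h := Path.Homotopic.map (Nonempty.map2 Path.Homotopic.prodHomotopy hp hq) ⟨s, hc⟩
  exact cast_homotopic _ _ _ _ h

include hc h1 in
private lemma loop_homotopic_refl (h2 : ∀ x, s (x, c) = x) (h3 : ∀ x, s (c, x) = c)
    (p : Path c c) : p.Homotopic (Path.refl c) := by
  have hp1 : p.Homotopic (p.trans (Path.refl c)) := ⟨(Path.Homotopy.transRefl p).symm⟩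
  have hp2 : p.Homotopic ((Path.refl c).trans p) := ⟨(Path.Homotopy.reflTrans p).symm⟩
  have key : (Path.refl c).Homotopic (p.trans (Path.refl c)) := by
    have := phi_homotopic s c hc h1 hp1 hp2
    rw [phi_diag, phi_trans, phi_refl_right s c hc h1 h2, phi_refl_left s c hc h1 h3] at this
    exact this
  exact (hp1.trans key.symm)

end Aux

/-- the fundamental group of a topological opimplicative subtraction
at its constant is trivial. -/
theorem fundamentalGroup_of_topological_opimplicative_subtraction_trivial
    {X : Type*} [TopologicalSpace X] (s : X × X → X) (c : X)
    (hc : Continuous s)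
    (h1 : ∀ x, s (x, x) = c) (h2 : ∀ x, s (x, c) = x) (h3 : ∀ x, s (c, x) = c) :
    Subsingleton (FundamentalGroup X c) := by
  letI := Path.Homotopic.setoid c c
  have key : ∀ p : Path c c, p.Homotopic (Path.refl c) :=
    loop_homotopic_refl s c hc h1 h2 h3
  haveI hq : Subsingleton (Path.Homotopic.Quotient c c) := by
    constructor
    intro a b
    induction a using Quotient.inductionOn with
    | h p =>
      induction b using Quotient.inductionOn with
      | h q => exact Quotient.sound ((key p).trans (key q).symm)
  constructor
  intro a b
  exact Subsingleton.elim (α := Path.Homotopic.Quotient c c) a b
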